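/- (Jump condition implies agreement of the traces along a connected interface.) Let d ≥ 2 and let Ω, Ω⁺, Ω⁻, Γ, n, y⁺, y⁻ be as in the interface setting with Γ connected. Suppose there exists a continuous map a : Γ → ℝ^d such that Dy⁺(x) = Dy⁻(x) + a(x) ⊗ n(x) for all x ∈ Γ, and suppose y⁺(x₀) = y⁻(x₀) for some x₀ ∈ Γ. Then y⁺(x) = y⁻(x) for all x ∈ Γ. -/

import Mathlib

open Metric Set MeasureTheory
open scoped RealInnerProductSpace NNReal

noncomputable section

/-- `ℝ^d` with the Euclidean structure. -/
abbrev Euc (d : ℕ) := EuclideanSpace ℝ (Fin d)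

/-- Near `ξ`, the set `Γ` is the graph of a `C¹` function in a suitable Cartesian
coordinate system: there is a unit vector `ν` (the last coordinate direction) and a
`C¹` function `g` on the orthogonal hyperplane such that inside some ball around `ξ`,
`Γ` consists exactly of the points whose `ν`-coordinate equals `g` of their
hyperplane coordinates. -/
def IsC1GraphAt (d : ℕ) (Γ : Set (Euc d)) (ξ : Euc d) : Prop :=
  ∃ r : ℝ, 0 < r ∧ ∃ ν : Euc d, ‖ν‖ = 1 ∧
    ∃ g : ((Submodule.span ℝ {ν})ᗮ : Submodule ℝ (Euc d)) → ℝ, ContDiff ℝ 1 g ∧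
      Γ ∩ ball ξ r =
        {x ∈ ball ξ r | ⟪x, ν⟫ = g (Submodule.orthogonalProjectionOnto (Submodule.span ℝ {ν})ᗮ x)}

/-- A `(d-1)`-surface of class `C¹`: a relatively compact set, equal to its manifold
interior (every point has an open neighbourhood in `Γ` homeomorphic to an open ball
in `ℝ^(d-1)`), which is locally the graph of a `C¹` function. -/
structure IsC1Surface (d : ℕ) (Γ : Set (Euc d)) : Prop where
  relCompact : IsCompact (closure Γ)
  locHomeo : ∀ ξ (hξ : ξ ∈ Γ), ∃ V : Set Γ, IsOpen V ∧ ⟨ξ, hξ⟩ ∈ V ∧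
      Nonempty (V ≃ₜ (ball (0 : EuclideanSpace ℝ (Fin (d - 1))) 1 :
        Set (EuclideanSpace ℝ (Fin (d - 1)))))
  locGraph : ∀ ξ ∈ Γ, IsC1GraphAt d Γ ξ

/-- A bounded domain of class `C¹`: open, connected, bounded, and near each boundary
point, in suitable Cartesian coordinates, `Ω` is the region above the graph of a `C¹`
function and `∂Ω` is the graph itself. -/
structure IsC1Domain (d : ℕ) (Ω : Set (Euc d)) : Prop where
  isOpen : IsOpen Ω
  isConnected : IsConnected Ω
  isBounded : Bornology.IsBounded Ω
  locGraph : ∀ ξ ∈ frontier Ω, ∃ r : ℝ, 0 < r ∧ ∃ ν : Euc d, ‖ν‖ = 1 ∧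
    ∃ g : ((Submodule.span ℝ {ν})ᗮ : Submodule ℝ (Euc d)) → ℝ, ContDiff ℝ 1 g ∧
      Ω ∩ ball ξ r =
        {x ∈ ball ξ r | g (Submodule.orthogonalProjectionOnto (Submodule.span ℝ {ν})ᗮ x) < ⟪x, ν⟫} ∧
      frontier Ω ∩ ball ξ r =
        {x ∈ ball ξ r | ⟪x, ν⟫ = g (Submodule.orthogonalProjectionOnto (Submodule.span ℝ {ν})ᗮ x)}

/-- The interface setting: `Ω` is a bounded `C¹` domain written as the disjoint union
`Ω = Ω⁺ ∪ Γ ∪ Ω⁻` of two disjoint open sets and a `C¹` interface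
`Γ = Ω ∩ ∂Ω⁺ = Ω ∩ ∂Ω⁻`, and `n` is the continuous unit normal on `Γ`, outward with
respect to `Ω⁺` (i.e. normal to every `C¹` curve in `Γ`, and pointing from `Ω⁺`
towards `Ω⁻`). -/
structure InterfaceSetting (d : ℕ) (Ω Ωp Ωm Γ : Set (Euc d)) (n : Euc d → Euc d) : Prop where
  dom : IsC1Domain d Ω
  openP : IsOpen Ωp
  openM : IsOpen Ωm
  disjointPM : Disjoint Ωp Ωm
  decomp : Ω = Ωp ∪ Γ ∪ Ωm
  interP : Γ = Ω ∩ frontier Ωp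
  interM : Γ = Ω ∩ frontier Ωm
  surface : IsC1Surface d Γ
  n_cont : ContinuousOn n Γ
  n_unit : ∀ x ∈ Γ, ‖n x‖ = 1
  n_normal : ∀ x ∈ Γ, ∀ γ : ℝ → Euc d, γ 0 = x → (∀ᶠ t in nhds (0 : ℝ), γ t ∈ Γ) →
      DifferentiableAt ℝ γ 0 → ⟪deriv γ 0, n x⟫ = 0
  n_outward : ∀ x ∈ Γ, ∀ᶠ t in nhdsWithin (0 : ℝ) (Ioi 0),
      x - t • n x ∈ Ωp ∧ x + t • n x ∈ Ωm

set_option maxHeartbeats 1000000 in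
theorem key_local (d : ℕ) (Γ : Set (Euc d)) (n : Euc d → Euc d)
    (yp ym a : Euc d → Euc d)
    (hdp : ∀ z ∈ Γ, DifferentiableAt ℝ yp z)
    (hdm : ∀ z ∈ Γ, DifferentiableAt ℝ ym z)
    (hnormal : ∀ x ∈ Γ, ∀ γ : ℝ → Euc d, γ 0 = x → (∀ᶠ t in nhds (0 : ℝ), γ t ∈ Γ) →
      DifferentiableAt ℝ γ 0 → ⟪deriv γ 0, n x⟫ = 0)
    (hjump : ∀ x ∈ Γ, ∀ v : Euc d,
      fderiv ℝ yp x v = fderiv ℝ ym x v + ⟪n x, v⟫ • a x)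
    (ξ : Euc d) (hξ : ξ ∈ Γ) (hgr : IsC1GraphAt d Γ ξ) :
    ∃ ε > 0, ∀ x ∈ Γ, x ∈ ball ξ ε → yp x - ym x = yp ξ - ym ξ := by
  obtain ⟨r, hr, ν, hν, g, hg, hgraph⟩ := hgr
  have hνK : ν ∈ ((Submodule.span ℝ {ν})ᗮ)ᗮ :=
    (Submodule.span ℝ {ν}).le_orthogonal_orthogonal (Submodule.mem_span_singleton_self ν)
  have hPν : Submodule.orthogonalProjectionOnto (Submodule.span ℝ {ν})ᗮ ν = 0 :=
    Submodule.orthogonalProjectionOnto_apply_of_mem_orthogonal hνK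
  have hPmem : ∀ p : (Submodule.span ℝ {ν})ᗮ,
      Submodule.orthogonalProjectionOnto (Submodule.span ℝ {ν})ᗮ (p : Euc d) = p := fun p =>
    Submodule.orthogonalProjectionOnto_mem_subspace_eq_self p
  have hinner : ∀ p : (Submodule.span ℝ {ν})ᗮ, ⟪(p : Euc d), ν⟫ = 0 := by
    intro p
    have := p.2 ν (Submodule.mem_span_singleton_self ν)
    rwa [real_inner_comm] at this
  have hdecomp : ∀ x : Euc d,
      x = (Submodule.orthogonalProjectionOnto (Submodule.span ℝ {ν})ᗮ x : Euc d) + ⟪x, ν⟫ • ν := by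
    intro x
    have hsub : x - Submodule.orthogonalProjectionOnto (Submodule.span ℝ {ν})ᗮ x
        ∈ ((Submodule.span ℝ {ν})ᗮ)ᗮ := Submodule.sub_starProjection_mem_orthogonal x
    rw [Submodule.orthogonal_orthogonal] at hsub
    obtain ⟨s, hs⟩ := Submodule.mem_span_singleton.mp hsub
    have hx : x = (Submodule.orthogonalProjectionOnto (Submodule.span ℝ {ν})ᗮ x : Euc d) + s • ν := by
      rw [hs]; abel
    have : ⟪x, ν⟫ = s := by
      rw [hx, inner_add_left, hinner, real_inner_smul_left, real_inner_self_eq_norm_sq, hν]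
      ring
    rw [this, ← hx]
  -- the lift map
  set L : (Submodule.span ℝ {ν})ᗮ → Euc d := fun p => (p : Euc d) + g p • ν with hL
  have hLdiff : Differentiable ℝ L := by
    have h1 : Differentiable ℝ (fun p : (Submodule.span ℝ {ν})ᗮ => (p : Euc d)) :=
      (Submodule.span ℝ {ν})ᗮ.subtypeL.differentiable
    exact h1.add ((hg.differentiable one_ne_zero).smul_const ν)
  have hLinner : ∀ p, ⟪L p, ν⟫ = g p := by
    intro p
    simp only [hL, inner_add_left, hinner, real_inner_smul_left,
      real_inner_self_eq_norm_sq, hν]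
    ring
  have hLP : ∀ p, Submodule.orthogonalProjectionOnto (Submodule.span ℝ {ν})ᗮ (L p) = p := by
    intro p
    simp only [hL, map_add, hPmem, ContinuousLinearMap.map_smul, hPν, smul_zero, add_zero]
  have hLΓ : ∀ p, L p ∈ ball ξ r → L p ∈ Γ := by
    intro p hb
    have : L p ∈ {x ∈ ball ξ r |
        ⟪x, ν⟫ = g (Submodule.orthogonalProjectionOnto (Submodule.span ℝ {ν})ᗮ x)} :=
      ⟨hb, by rw [hLinner, hLP]⟩
    rw [← hgraph] at this
    exact this.1
  have hx_eq : ∀ x ∈ Γ, x ∈ ball ξ r → L (Submodule.orthogonalProjectionOnto (Submodule.span ℝ {ν})ᗮ x) = x := by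
    intro x hxΓ hxb
    have hxg : ⟪x, ν⟫ = g (Submodule.orthogonalProjectionOnto (Submodule.span ℝ {ν})ᗮ x) := by
      have : x ∈ Γ ∩ ball ξ r := ⟨hxΓ, hxb⟩
      rw [hgraph] at this
      exact this.2
    have := hdecomp x
    rw [hxg] at this
    simpa [hL] using this.symm
  have hξball : ξ ∈ ball ξ r := mem_ball_self hr
  have hLξ : L (Submodule.orthogonalProjectionOnto (Submodule.span ℝ {ν})ᗮ ξ) = ξ := hx_eq ξ hξ hξball
  set Pξ := Submodule.orthogonalProjectionOnto (Submodule.span ℝ {ν})ᗮ ξ with hPξ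
  have hcontL : ContinuousAt L Pξ := hLdiff.continuous.continuousAt
  obtain ⟨δ, hδ, hδball⟩ : ∃ δ > 0, ∀ p, dist p Pξ < δ → L p ∈ ball ξ r := by
    obtain ⟨δ, hδ, h⟩ := Metric.continuousAt_iff.mp hcontL r hr
    exact ⟨δ, hδ, fun p hp => by
      have := h hp
      rwa [hLξ, ← mem_ball] at this⟩
  refine ⟨min (δ / 2) r, by positivity, ?_⟩
  intro x hxΓ hxball
  have hxd := mem_ball.mp hxball
  have hxr : x ∈ ball ξ r := mem_ball.mpr (lt_of_lt_of_le hxd (min_le_right _ _))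
  have hxδ : dist x ξ < δ / 2 := lt_of_lt_of_le hxd (min_le_left _ _)
  set Px := Submodule.orthogonalProjectionOnto (Submodule.span ℝ {ν})ᗮ x with hPx
  set q := Px - Pξ with hq
  have hqnorm : ‖q‖ < δ / 2 := by
    have h1 : ‖q‖ ≤ ‖x - ξ‖ := by
      have h2 : q = Submodule.orthogonalProjectionOnto (Submodule.span ℝ {ν})ᗮ (x - ξ) := by
        rw [hq, hPx, hPξ, map_sub]
      rw [h2]
      calc ‖Submodule.orthogonalProjectionOnto (Submodule.span ℝ {ν})ᗮ (x - ξ)‖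
          ≤ ‖Submodule.orthogonalProjectionOnto (Submodule.span ℝ {ν})ᗮ‖ * ‖x - ξ‖ :=
            (Submodule.orthogonalProjectionOnto (Submodule.span ℝ {ν})ᗮ).le_opNorm _
        _ ≤ 1 * ‖x - ξ‖ :=
            mul_le_mul_of_nonneg_right (Submodule.orthogonalProjectionOnto_norm_le _) (norm_nonneg _)
        _ = ‖x - ξ‖ := one_mul _
    calc ‖q‖ ≤ ‖x - ξ‖ := h1
      _ = dist x ξ := (dist_eq_norm x ξ).symm
      _ < δ / 2 := hxδ
  set γ : ℝ → Euc d := fun t => L (Pξ + t • q) with hγ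
  have hmem : ∀ t : ℝ, |t| < 2 → γ t ∈ Γ := by
    intro t ht
    apply hLΓ
    apply hδball
    have hd : dist (Pξ + t • q) Pξ = |t| * ‖q‖ := by
      rw [dist_eq_norm]
      simp [norm_smul]
    rw [hd]
    calc |t| * ‖q‖ ≤ 2 * ‖q‖ := mul_le_mul_of_nonneg_right ht.le (norm_nonneg _)
      _ < 2 * (δ / 2) := by
          exact mul_lt_mul_of_pos_left hqnorm (by norm_num)
      _ = δ := by ring
  have hγdiff : ∀ t : ℝ, DifferentiableAt ℝ γ t := by
    intro t
    apply hLdiff.differentiableAt.comp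
    exact (differentiableAt_const _).add (differentiableAt_id.smul_const q)
  have hγ0 : γ 0 = ξ := by
    have : Pξ + (0 : ℝ) • q = Pξ := by simp
    rw [hγ]; simp only [this]; exact hLξ
  have hγ1 : γ 1 = x := by
    have h1 : Pξ + (1 : ℝ) • q = Px := by rw [hq]; simp
    rw [hγ]; simp only [h1]
    exact hx_eq x hxΓ hxr
  have hnorm0 : ∀ t ∈ Icc (0:ℝ) 1, ⟪deriv γ t, n (γ t)⟫ = 0 := by
    intro t ht
    have htΓ : γ t ∈ Γ := hmem t (by rw [abs_of_nonneg ht.1]; linarith [ht.2])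
    have := hnormal (γ t) htΓ (fun s => γ (t + s)) (by simp) ?_ ?_
    · rwa [deriv_comp_const_add, add_zero] at this
    · filter_upwards [Metric.ball_mem_nhds (0:ℝ) one_pos] with s hs
      apply hmem
      rw [Real.ball_eq_Ioo] at hs
      simp only [zero_sub, zero_add] at hs
      rw [abs_lt]
      exact ⟨by nlinarith [ht.1, ht.2, hs.1, hs.2], by nlinarith [ht.1, ht.2, hs.1, hs.2]⟩
    · have h2 : DifferentiableAt ℝ (fun s : ℝ => t + s) 0 :=
        (differentiableAt_const _).add differentiableAt_id
      exact (hγdiff (t + 0)).comp 0 (by simpa using h2)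
  set h : ℝ → Euc d := fun t => yp (γ t) - ym (γ t) with hh
  have hhd : ∀ t ∈ Icc (0:ℝ) 1, HasDerivAt h 0 t := by
    intro t ht
    have htΓ : γ t ∈ Γ := hmem t (by rw [abs_of_nonneg ht.1]; linarith [ht.2])
    have hγd : HasDerivAt γ (deriv γ t) t := (hγdiff t).hasDerivAt
    have hp : HasDerivAt (fun s => yp (γ s)) (fderiv ℝ yp (γ t) (deriv γ t)) t :=
      ((hdp (γ t) htΓ).hasFDerivAt).comp_hasDerivAt t hγd
    have hm : HasDerivAt (fun s => ym (γ s)) (fderiv ℝ ym (γ t) (deriv γ t)) t :=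
      ((hdm (γ t) htΓ).hasFDerivAt).comp_hasDerivAt t hγd
    have hsub := hp.sub hm
    have heq : fderiv ℝ yp (γ t) (deriv γ t) - fderiv ℝ ym (γ t) (deriv γ t) = 0 := by
      rw [hjump (γ t) htΓ (deriv γ t)]
      rw [show ⟪n (γ t), deriv γ t⟫ = 0 from by
        rw [real_inner_comm]; exact hnorm0 t ht]
      simp
    rwa [heq] at hsub
  have hcont : ContinuousOn h (Icc 0 1) := fun t ht =>
    (hhd t ht).continuousAt.continuousWithinAt
  have h10 : h 1 = h 0 :=
    constant_of_has_deriv_right_zero hcont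
      (fun t ht => (hhd t (Ico_subset_Icc_self ht)).hasDerivWithinAt) 1
      (right_mem_Icc.mpr zero_le_one)
  rw [hh] at h10
  simpa [hγ0, hγ1] using h10



/-- `y ∈ C¹(cl A, ℝ^d)`: `y` coincides on a neighbourhood of `cl A` with a continuously
differentiable map, i.e. `y` is `C¹` on an open set containing `cl A`. -/
def C1OnClosure (d : ℕ) (y : Euc d → Euc d) (A : Set (Euc d)) : Prop :=
  ∃ U : Set (Euc d), IsOpen U ∧ closure A ⊆ U ∧ ContDiffOn ℝ 1 y U


/-- jump condition implies agreement of the traces along a connected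
interface. If `Γ` is connected, the jump condition holds on `Γ`, and `y⁺ = y⁻` at one
point of `Γ`, then `y⁺ = y⁻` on all of `Γ`. -/
theorem statement11 (d : ℕ) (hd : 2 ≤ d)
    (Ω Ωp Ωm Γ : Set (Euc d)) (n : Euc d → Euc d)
    (hset : InterfaceSetting d Ω Ωp Ωm Γ n)
    (hconn : IsConnected Γ)
    (yp ym : Euc d → Euc d)
    (hyp : C1OnClosure d yp Ωp) (hym : C1OnClosure d ym Ωm)
    (a : Euc d → Euc d) (ha : ContinuousOn a Γ)
    (hjump : ∀ x ∈ Γ, ∀ v : Euc d,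
      fderiv ℝ yp x v = fderiv ℝ ym x v + ⟪n x, v⟫ • a x)
    (x0 : Euc d) (hx0 : x0 ∈ Γ) (htrace : yp x0 = ym x0) :
    ∀ x ∈ Γ, yp x = ym x := by
  obtain ⟨Up, hUpo, hUps, hypC⟩ := hyp
  obtain ⟨Um, hUmo, hUms, hymC⟩ := hym
  have hΓp : Γ ⊆ Up := fun z hz => hUps (frontier_subset_closure ((hset.interP ▸ hz).2))
  have hΓm : Γ ⊆ Um := fun z hz => hUms (frontier_subset_closure ((hset.interM ▸ hz).2))
  have hdp : ∀ z ∈ Γ, DifferentiableAt ℝ yp z := fun z hz =>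
    (hypC.differentiableOn one_ne_zero).differentiableAt (hUpo.mem_nhds (hΓp hz))
  have hdm : ∀ z ∈ Γ, DifferentiableAt ℝ ym z := fun z hz =>
    (hymC.differentiableOn one_ne_zero).differentiableAt (hUmo.mem_nhds (hΓm hz))
  have key := key_local d Γ n yp ym a hdp hdm hset.n_normal hjump
  set f : Γ → Euc d := fun z => yp z - ym z with hf
  have hloc : IsLocallyConstant f := by
    rw [IsLocallyConstant.iff_exists_open]
    intro z
    obtain ⟨ε, hε, hkey⟩ := key z z.2 (hset.surface.locGraph z z.2)
    refine ⟨Subtype.val ⁻¹' ball (z : Euc d) ε,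
      isOpen_ball.preimage continuous_subtype_val, mem_ball_self hε, ?_⟩
    intro w hw
    exact hkey w w.2 hw
  haveI : ConnectedSpace Γ := isConnected_iff_connectedSpace.mp hconn
  intro x hx
  have hconst := hloc.apply_eq_of_preconnectedSpace ⟨x, hx⟩ ⟨x0, hx0⟩
  simp only [hf] at hconst
  have : yp x - ym x = 0 := by rw [hconst, htrace, sub_self]
  exact sub_eq_zero.mp this

end
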